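/- arXiv:1102.0568 — 2 statements merged into one kernel-verified Lean document; each statement's English description precedes it below -/
import Mathlib

section
/- Let p be a prime, u ∈ Z_p[[x]] with u(0)=0, u'(0) a unit, and suppose the Weierstrass degree of u^{∘p^{n−δ}}(x) − x equals p^n (where δ=1 for p>2 and δ=2 for p=2). Write u^{∘p^{n−δ}}(x) − x = Σ b_i x^i. Let π be an element of an algebraic closure of Q_p with v_p(π) = 1/((p−1)p^n). Then u^{∘p^{n−δ}}(π) ≡ π + b_{p^n} π^{p^n} mod π^{p^n+1}, and for any integer j ≥ 0, u^{∘jp^{n−δ}}(π) ≡ π + j·b_{p^n} π^{p^n} mod π^{p^n+1}. -/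
set_option linter.unusedSectionVars false
set_option linter.unusedVariables false


open PowerSeries Filter

noncomputable section

/-- Composition `f(g(x))` of formal power series (intended for `g` with zero constant term). -/
def compPS {R : Type*} [CommSemiring R] (f g : PowerSeries R) : PowerSeries R :=
  PowerSeries.mk fun n =>
    ∑ k ∈ Finset.range (n + 1), PowerSeries.coeff (R := R) k f * PowerSeries.coeff (R := R) n (g ^ k)

/-- `n`-fold compositional iterate of a power series. -/
def iterPS {R : Type*} [CommSemiring R] (f : PowerSeries R) : ℕ → PowerSeries R
  | 0 => PowerSeries.X
  | n + 1 => compPS f (iterPS f n)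

/-- Evaluation of a power series at a point of a normed field. -/
def evalT {R K : Type*} [CommSemiring R] [NormedField K] [Algebra R K]
    (f : PowerSeries R) (x : K) : K :=
  ∑' n : ℕ, algebraMap R K (PowerSeries.coeff (R := R) n f) * x ^ n

lemma aux_hasSum_of_isComplete {ι G : Type*} [NormedAddCommGroup G] {s : Set G}
    (hs : IsComplete s) {f : ι → G} (hmem : ∀ A : Finset ι, ∑ i ∈ A, f i ∈ s)
    (hnorm : Summable fun i => ‖f i‖) : ∃ a ∈ s, HasSum f a := by
  have hc : CauchySeq (fun A : Finset ι => ∑ i ∈ A, f i) :=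
    cauchySeq_finset_of_norm_bounded hnorm fun i => le_rfl
  obtain ⟨a, has, hta⟩ := hs _ hc (Filter.le_principal_iff.mpr
    (Filter.mem_map.mpr (Filter.Eventually.of_forall hmem)))
  exact ⟨a, has, hta⟩

section Aux

variable {p : ℕ} [Fact p.Prime] {K : Type*} [NormedField K] [IsUltrametricDist K]
  [Algebra ℚ_[p] K] [Algebra ℤ_[p] K] [IsScalarTower ℤ_[p] ℚ_[p] K]
  {E : IntermediateField ℚ_[p] K} (hEc : IsComplete (E : Set K))
  (hK : ∀ x : ℚ_[p], ‖algebraMap ℚ_[p] K x‖ = ‖x‖)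
  {r : ℝ} (hr0 : 0 ≤ r) (hr1 : r < 1)

lemma hA_mem (a : ℤ_[p]) : algebraMap ℤ_[p] K a ∈ E := by
  rw [IsScalarTower.algebraMap_apply ℤ_[p] ℚ_[p] K]
  exact E.algebraMap_mem _

include hK in
lemma hA_norm (a : ℤ_[p]) : ‖algebraMap ℤ_[p] K a‖ = ‖a‖ := by
  rw [IsScalarTower.algebraMap_apply ℤ_[p] ℚ_[p] K, hK]
  exact PadicInt.padic_norm_e_of_padicInt a

include hK in
lemma hA_norm_le (a : ℤ_[p]) : ‖algebraMap ℤ_[p] K a‖ ≤ 1 := by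
  rw [hA_norm hK]; exact a.norm_le_one

include hK in
lemma term_norm_le (f : PowerSeries ℤ_[p]) {y : K} (hyr : ‖y‖ ≤ r) (i : ℕ) :
    ‖algebraMap ℤ_[p] K (PowerSeries.coeff (R := ℤ_[p]) i f) * y ^ i‖ ≤ r ^ i := by
  rw [norm_mul, norm_pow]
  calc ‖algebraMap ℤ_[p] K (PowerSeries.coeff (R := ℤ_[p]) i f)‖ * ‖y‖ ^ i
      ≤ 1 * r ^ i := by
        apply mul_le_mul (hA_norm_le hK _) (pow_le_pow_left₀ (norm_nonneg y) hyr i)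
          (pow_nonneg (norm_nonneg y) i) zero_le_one
    _ = r ^ i := one_mul _

lemma term_mem (f : PowerSeries ℤ_[p]) {y : K} (hyE : y ∈ E) (i : ℕ) :
    algebraMap ℤ_[p] K (PowerSeries.coeff (R := ℤ_[p]) i f) * y ^ i ∈ E :=
  mul_mem (hA_mem _) (pow_mem hyE i)

include hEc hK hr0 hr1 in
lemma evalT_hasSum (f : PowerSeries ℤ_[p]) {y : K} (hyE : y ∈ E) (hyr : ‖y‖ ≤ r) :
    HasSum (fun i : ℕ => algebraMap ℤ_[p] K (PowerSeries.coeff (R := ℤ_[p]) i f) * y ^ i) (evalT f y)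
      ∧ evalT f y ∈ E := by
  obtain ⟨a, haE, ha⟩ := aux_hasSum_of_isComplete hEc
    (fun A => sum_mem fun i _ => term_mem f hyE i)
    (Summable.of_nonneg_of_le (fun i => norm_nonneg _) (term_norm_le hK f hyr)
      (summable_geometric_of_lt_one hr0 hr1))
  have : evalT f y = a := ha.tsum_eq
  exact ⟨this ▸ ha, this ▸ haE⟩

lemma evalT_norm_le {f : PowerSeries ℤ_[p]} {y : K} {C : ℝ} (hC : 0 ≤ C)
    (h : ∀ i, ‖algebraMap ℤ_[p] K (PowerSeries.coeff (R := ℤ_[p]) i f) * y ^ i‖ ≤ C) :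
    ‖evalT f y‖ ≤ C :=
  IsUltrametricDist.norm_tsum_le_of_forall_le_of_nonneg hC h

include hK in
lemma evalT_norm_le_self (f : PowerSeries ℤ_[p]) (hf0 : PowerSeries.coeff (R := ℤ_[p]) 0 f = 0)
    {y : K} (hy1 : ‖y‖ ≤ 1) : ‖evalT f y‖ ≤ ‖y‖ := by
  apply evalT_norm_le (norm_nonneg y)
  intro i
  cases i with
  | zero => simp [hf0]
  | succ i =>
    rw [norm_mul, norm_pow]
    calc ‖algebraMap ℤ_[p] K (PowerSeries.coeff (R := ℤ_[p]) (i+1) f)‖ * ‖y‖ ^ (i+1)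
        ≤ 1 * ‖y‖ ^ (i+1) := by
          apply mul_le_mul_of_nonneg_right (hA_norm_le hK _) (pow_nonneg (norm_nonneg y) _)
      _ = ‖y‖ ^ (i+1) := one_mul _
      _ ≤ ‖y‖ ^ 1 := pow_le_pow_of_le_one (norm_nonneg y) hy1 (by omega)
      _ = ‖y‖ := pow_one _

lemma evalT_one (y : K) : evalT (1 : PowerSeries ℤ_[p]) y = 1 := by
  have h : HasSum (fun i : ℕ =>
      algebraMap ℤ_[p] K (PowerSeries.coeff (R := ℤ_[p]) i 1) * y ^ i) (1 : K) := by
    have := hasSum_single (f := fun i : ℕ =>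
        algebraMap ℤ_[p] K (PowerSeries.coeff (R := ℤ_[p]) i 1) * y ^ i) 0
      (by intro b hb; simp [PowerSeries.coeff_one, hb])
    simpa using this
  exact h.tsum_eq

include hEc hK hr0 hr1 in
lemma evalT_mul (f g : PowerSeries ℤ_[p]) {y : K} (hyE : y ∈ E) (hyr : ‖y‖ ≤ r) :
    evalT (f * g) y = evalT f y * evalT g y := by
  classical
  set T : ℕ → ℤ_[p]⟦X⟧ → K := fun i h => algebraMap ℤ_[p] K (PowerSeries.coeff (R := ℤ_[p]) i h) * y ^ i
    with hT
  have hf := (evalT_hasSum hEc hK hr0 hr1 f hyE hyr).1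
  have hg := (evalT_hasSum hEc hK hr0 hr1 g hyE hyr).1
  -- the product family
  obtain ⟨S, hSE, hS⟩ := aux_hasSum_of_isComplete (f := fun q : ℕ × ℕ => T q.1 f * T q.2 g) hEc
    (fun A => sum_mem fun q _ => mul_mem (term_mem f hyE q.1) (term_mem g hyE q.2))
    (by
      refine Summable.of_nonneg_of_le (fun q => norm_nonneg _) ?_
        (Summable.mul_of_nonneg (summable_geometric_of_lt_one hr0 hr1)
          (summable_geometric_of_lt_one hr0 hr1) (fun i => pow_nonneg hr0 i)
          (fun i => pow_nonneg hr0 i))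
      intro q
      rw [norm_mul]
      exact mul_le_mul (term_norm_le hK f hyr q.1) (term_norm_le hK g hyr q.2)
        (norm_nonneg _) (pow_nonneg hr0 _))
  have key : evalT f y * evalT g y = S := hf.mul_eq hg hS
  -- regroup along antidiagonals
  have hsig : HasSum ((fun q : ℕ × ℕ => T q.1 f * T q.2 g) ∘ Finset.HasAntidiagonal.sigmaAntidiagonalEquivProd) S :=
    Finset.HasAntidiagonal.sigmaAntidiagonalEquivProd.hasSum_iff.mpr hS
  have hfib : ∀ n : ℕ, HasSum
      (fun c : (Finset.HasAntidiagonal.antidiagonal n : Finset (ℕ × ℕ)) => T (c : ℕ × ℕ).1 f * T (c : ℕ × ℕ).2 g)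
      (T n (f * g)) := by
    intro n
    have h1 := hasSum_fintype
      (fun c : (Finset.HasAntidiagonal.antidiagonal n : Finset (ℕ × ℕ)) => T (c : ℕ × ℕ).1 f * T (c : ℕ × ℕ).2 g)
    have h2 : ∑ c : (Finset.HasAntidiagonal.antidiagonal n : Finset (ℕ × ℕ)), T (c : ℕ × ℕ).1 f * T (c : ℕ × ℕ).2 g
        = T n (f * g) := by
      rw [Finset.sum_coe_sort (Finset.HasAntidiagonal.antidiagonal n) (fun q : ℕ × ℕ => T q.1 f * T q.2 g)]
      rw [hT]
      simp only
      rw [PowerSeries.coeff_mul, map_sum, Finset.sum_mul]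
      apply Finset.sum_congr rfl
      intro q hq
      rw [Finset.HasAntidiagonal.mem_antidiagonal] at hq
      rw [map_mul, ← hq, pow_add]
      ring
    rwa [h2] at h1
  have H : HasSum (fun n => T n (f * g)) S := HasSum.sigma hsig hfib
  have := (evalT_hasSum hEc hK hr0 hr1 (f * g) hyE hyr).1
  rw [key]
  exact this.unique H

include hEc hK hr0 hr1 in
lemma evalT_pow (g : PowerSeries ℤ_[p]) {y : K} (hyE : y ∈ E) (hyr : ‖y‖ ≤ r) (k : ℕ) :
    evalT (g ^ k) y = (evalT g y) ^ k := by
  induction k with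
  | zero => simpa using evalT_one (p := p) y
  | succ k ih => rw [pow_succ, evalT_mul hEc hK hr0 hr1 _ _ hyE hyr, ih, pow_succ]


lemma coeff_pow_eq_zero {g : PowerSeries ℤ_[p]} (hg0 : PowerSeries.coeff (R := ℤ_[p]) 0 g = 0) :
    ∀ k m : ℕ, m < k → PowerSeries.coeff (R := ℤ_[p]) m (g ^ k) = 0 := by
  intro k
  induction k with
  | zero => omega
  | succ k ih =>
    intro m hm
    rw [pow_succ, PowerSeries.coeff_mul]
    apply Finset.sum_eq_zero
    rintro ⟨i, j⟩ hq
    rw [Finset.HasAntidiagonal.mem_antidiagonal] at hq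
    simp only
    rcases lt_or_ge i k with h | h
    · rw [ih i h, zero_mul]
    · have : j = 0 := by omega
      rw [this, hg0, mul_zero]

include hEc hK hr0 hr1 in
lemma evalT_comp (f g : PowerSeries ℤ_[p]) (hg0 : PowerSeries.coeff (R := ℤ_[p]) 0 g = 0)
    {y : K} (hyE : y ∈ E) (hyr : ‖y‖ ≤ r) :
    evalT (compPS f g) y = evalT f (evalT g y) := by
  classical
  have hy1 : ‖y‖ ≤ 1 := hyr.trans hr1.le
  have hgE : evalT g y ∈ E := (evalT_hasSum hEc hK hr0 hr1 g hyE hyr).2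
  have hgr : ‖evalT g y‖ ≤ r := (evalT_norm_le_self hK g hg0 hy1).trans hyr
  set h : ℕ × ℕ → K := fun q =>
    algebraMap ℤ_[p] K (PowerSeries.coeff (R := ℤ_[p]) q.2 f) *
      (algebraMap ℤ_[p] K (PowerSeries.coeff (R := ℤ_[p]) q.1 (g ^ q.2)) * y ^ q.1) with hh
  set s : ℝ := Real.sqrt r with hs
  have hs0 : 0 ≤ s := Real.sqrt_nonneg r
  have hs1 : s < 1 := by
    rw [hs, show (1:ℝ) = Real.sqrt 1 by simp]
    exact Real.sqrt_lt_sqrt hr0 hr1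
  have hss : s * s = r := Real.mul_self_sqrt hr0
  have hbound : ∀ q : ℕ × ℕ, ‖h q‖ ≤ s ^ q.1 * s ^ q.2 := by
    rintro ⟨m, k⟩
    rcases le_or_gt k m with hkm | hkm
    · have h1 : ‖h (m, k)‖ ≤ r ^ m := by
        rw [hh]
        simp only [norm_mul]
        calc ‖algebraMap ℤ_[p] K (PowerSeries.coeff (R := ℤ_[p]) k f)‖ *
              (‖algebraMap ℤ_[p] K (PowerSeries.coeff (R := ℤ_[p]) m (g ^ k))‖ * ‖y ^ m‖)
            ≤ 1 * (1 * r ^ m) := by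
              apply mul_le_mul (hA_norm_le hK _) _ (by positivity) zero_le_one
              apply mul_le_mul (hA_norm_le hK _) _ (by positivity) zero_le_one
              rw [norm_pow]
              exact pow_le_pow_left₀ (norm_nonneg y) hyr m
          _ = r ^ m := by ring
      refine h1.trans ?_
      have : r ^ m = s ^ m * s ^ m := by rw [← mul_pow, hss]
      rw [this]
      exact mul_le_mul_of_nonneg_left (pow_le_pow_of_le_one hs0 hs1.le hkm)
        (pow_nonneg hs0 m)
    · have : h (m, k) = 0 := by
        rw [hh]; simp only
        rw [coeff_pow_eq_zero hg0 k m hkm, map_zero, zero_mul, mul_zero]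
      rw [this, norm_zero]
      positivity
  obtain ⟨S, hSE, hS⟩ := aux_hasSum_of_isComplete (f := h) hEc
    (fun A => sum_mem fun q _ => mul_mem (hA_mem _) (mul_mem (hA_mem _) (pow_mem hyE _)))
    (Summable.of_nonneg_of_le (fun q => norm_nonneg _) hbound
      (Summable.mul_of_nonneg (summable_geometric_of_lt_one hs0 hs1)
        (summable_geometric_of_lt_one hs0 hs1) (fun i => pow_nonneg hs0 i)
        (fun i => pow_nonneg hs0 i)))
  -- grouping by first coordinate: evalT (compPS f g) y
  have hfib1 : ∀ m : ℕ, HasSum (fun k => h (m, k))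
      (algebraMap ℤ_[p] K (PowerSeries.coeff (R := ℤ_[p]) m (compPS f g)) * y ^ m) := by
    intro m
    have hz : ∀ k ∉ Finset.range (m + 1), h (m, k) = 0 := by
      intro k hk
      rw [Finset.mem_range, not_lt] at hk
      rw [hh]; simp only
      rw [coeff_pow_eq_zero hg0 k m (by omega), map_zero, zero_mul, mul_zero]
    have h1 := hasSum_sum_of_ne_finset_zero (L := SummationFilter.unconditional ℕ) hz
    have h2 : ∑ k ∈ Finset.range (m + 1), h (m, k)
        = algebraMap ℤ_[p] K (PowerSeries.coeff (R := ℤ_[p]) m (compPS f g)) * y ^ m := by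
      rw [hh]
      simp only [compPS, PowerSeries.coeff_mk, map_sum, Finset.sum_mul]
      apply Finset.sum_congr rfl
      intro k _
      rw [map_mul]
      ring
    rwa [h2] at h1
  have H1 : HasSum (fun m => algebraMap ℤ_[p] K (PowerSeries.coeff (R := ℤ_[p]) m (compPS f g)) * y ^ m)
      S := HasSum.prod_fiberwise hS hfib1
  have hcompS : evalT (compPS f g) y = S :=
    ((evalT_hasSum hEc hK hr0 hr1 (compPS f g) hyE hyr).1).unique H1
  -- grouping by second coordinate: evalT f (evalT g y)
  have hswap : HasSum (fun q : ℕ × ℕ => h (q.2, q.1)) S := by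
    have := (Equiv.prodComm ℕ ℕ).hasSum_iff (f := h) (a := S)
    exact this.mpr hS
  have hfib2 : ∀ k : ℕ, HasSum (fun m => h (m, k))
      (algebraMap ℤ_[p] K (PowerSeries.coeff (R := ℤ_[p]) k f) * (evalT g y) ^ k) := by
    intro k
    have h1 := ((evalT_hasSum hEc hK hr0 hr1 (g ^ k) hyE hyr).1).mul_left
      (algebraMap ℤ_[p] K (PowerSeries.coeff (R := ℤ_[p]) k f))
    rw [evalT_pow hEc hK hr0 hr1 g hyE hyr k] at h1
    exact h1
  have H2 : HasSum (fun k => algebraMap ℤ_[p] K (PowerSeries.coeff (R := ℤ_[p]) k f)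
      * (evalT g y) ^ k) S := HasSum.prod_fiberwise hswap hfib2
  have hfS : evalT f (evalT g y) = S :=
    ((evalT_hasSum hEc hK hr0 hr1 f hgE hgr).1).unique H2
  rw [hcompS, hfS]


lemma hasSum_evalT_X (y : K) :
    HasSum (fun i : ℕ => algebraMap ℤ_[p] K (PowerSeries.coeff (R := ℤ_[p]) i PowerSeries.X) * y ^ i)
      y := by
  have := hasSum_single (f := fun i : ℕ =>
      algebraMap ℤ_[p] K (PowerSeries.coeff (R := ℤ_[p]) i PowerSeries.X) * y ^ i) 1
    (by intro b hb; simp [PowerSeries.coeff_X, hb])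
  simpa [PowerSeries.coeff_X] using this

end Aux

set_option maxHeartbeats 1000000

theorem stmt_13 (p : ℕ) [Fact p.Prime]
    {K : Type*} [NormedField K] [IsUltrametricDist K]
    [Algebra ℚ_[p] K] [Algebra ℤ_[p] K] [IsScalarTower ℤ_[p] ℚ_[p] K]
    [IsAlgClosure ℚ_[p] K]
    (hK : ∀ x : ℚ_[p], ‖algebraMap ℚ_[p] K x‖ = ‖x‖)
    (u : PowerSeries ℤ_[p])
    (hu0 : PowerSeries.coeff (R := ℤ_[p]) 0 u = 0)
    (huinv : IsUnit (PowerSeries.coeff (R := ℤ_[p]) 1 u))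
    (δ n : ℕ) (hδ : δ = if p = 2 then 2 else 1) (hnδ : δ ≤ n)
    (w : PowerSeries ℤ_[p]) (hw : w = iterPS u (p ^ (n - δ)) - PowerSeries.X)
    -- the Weierstrass degree of `u^{∘p^{n-δ}}(x) - x` equals `p^n`
    (hwideg : IsUnit (PowerSeries.coeff (R := ℤ_[p]) (p ^ n) w))
    (hwlt : ∀ i < p ^ n, ¬ IsUnit (PowerSeries.coeff (R := ℤ_[p]) i w))
    -- `π` has `v_p(π) = 1/((p-1)p^n)`
    (π : K) (hπ0 : π ≠ 0) (hπv : ‖π‖ ^ ((p - 1) * p ^ n) = (p : ℝ)⁻¹) :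
    -- `u^{∘p^{n-δ}}(π) ≡ π + b_{p^n} π^{p^n} mod π^{p^n + 1}`
    ‖(fun x => evalT u x)^[p ^ (n - δ)] π -
        (π + algebraMap ℤ_[p] K (PowerSeries.coeff (R := ℤ_[p]) (p ^ n) w) * π ^ (p ^ n))‖ ≤
      ‖π‖ ^ (p ^ n + 1) ∧
    -- `u^{∘jp^{n-δ}}(π) ≡ π + j·b_{p^n} π^{p^n} mod π^{p^n + 1}` for every `j ≥ 0`
    ∀ j : ℕ, ‖(fun x => evalT u x)^[j * p ^ (n - δ)] π -
        (π + (j : K) * algebraMap ℤ_[p] K (PowerSeries.coeff (R := ℤ_[p]) (p ^ n) w) * π ^ (p ^ n))‖ ≤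
      ‖π‖ ^ (p ^ n + 1) := by
  classical
  have hp2 : 2 ≤ p := (Fact.out : p.Prime).two_le
  have hn1 : 1 ≤ n := le_trans (by rcases hδ with rfl; split <;> omega) hnδ
  have hpn2 : 2 ≤ p ^ n := by
    calc 2 ≤ p := hp2
    _ = p ^ 1 := (pow_one p).symm
    _ ≤ p ^ n := Nat.pow_le_pow_right (by omega) hn1
  -- setup
  letI : NormedSpace ℚ_[p] K :=
    { norm_smul_le := fun c x => by rw [Algebra.smul_def, norm_mul, hK] }
  have hint : IsIntegral ℚ_[p] π :=
    ((IsAlgClosure.isAlgebraic (R := ℚ_[p]) (K := K)).isAlgebraic π).isIntegral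
  set E : IntermediateField ℚ_[p] K := IntermediateField.adjoin ℚ_[p] {π} with hE
  have hEc : IsComplete (E : Set K) := by
    haveI := IntermediateField.adjoin.finiteDimensional hint
    haveI : FiniteDimensional ℚ_[p] (Subalgebra.toSubmodule E.toSubalgebra) := by
      rw [hE]; assumption
    exact Submodule.complete_of_finiteDimensional (Subalgebra.toSubmodule E.toSubalgebra)
  have hπE : π ∈ E := IntermediateField.mem_adjoin_simple_self ℚ_[p] π
  have hr0 : (0:ℝ) ≤ ‖π‖ := norm_nonneg π
  have hppos : (0:ℝ) < (p:ℝ)⁻¹ := by positivity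
  have hpinv1 : ((p:ℝ))⁻¹ < 1 := by
    rw [inv_lt_one_iff₀]; right; exact_mod_cast by omega
  have hr1 : ‖π‖ < 1 := by
    by_contra h
    push_neg at h
    have : (1:ℝ) ≤ ‖π‖ ^ ((p - 1) * p ^ n) := one_le_pow₀ h
    rw [hπv] at this
    linarith
  set N := p ^ (n - δ) with hN
  set b := PowerSeries.coeff (R := ℤ_[p]) (p ^ n) w with hb
  set C := ‖π‖ ^ (p ^ n + 1) with hC
  have hC0 : 0 ≤ C := pow_nonneg hr0 _
  have hrle1 : ‖π‖ ≤ 1 := hr1.le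
  have hpowmono : ∀ {a c : ℕ}, a ≤ c → ‖π‖ ^ c ≤ ‖π‖ ^ a := fun h =>
    pow_le_pow_of_le_one hr0 hrle1 h
  -- coefficients of w below p^n are divisible by p
  have hsmall : ∀ i < p ^ n, ‖algebraMap ℤ_[p] K (PowerSeries.coeff (R := ℤ_[p]) i w)‖ ≤
      ‖π‖ ^ ((p - 1) * p ^ n) := by
    intro i hi
    rw [hA_norm hK, hπv]
    have h1 : ‖PowerSeries.coeff (R := ℤ_[p]) i w‖ < 1 := PadicInt.not_isUnit_iff.mp (hwlt i hi)
    have := (PadicInt.norm_le_pow_iff_norm_lt_pow_add_one (PowerSeries.coeff (R := ℤ_[p]) i w)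
      (-1)).mpr (by simpa using h1)
    simpa [zpow_neg_one] using this
  -- norms of iterates
  have hF : ∀ y, y ∈ E → ‖y‖ ≤ ‖π‖ → evalT u y ∈ E ∧ ‖evalT u y‖ ≤ ‖π‖ :=
    fun y hyE hyr => ⟨(evalT_hasSum hEc hK hr0 hr1 u hyE hyr).2,
      (evalT_norm_le_self hK u hu0 (hyr.trans hrle1)).trans hyr⟩
  have hiter_mem : ∀ m : ℕ, (fun x => evalT u x)^[m] π ∈ E ∧
      ‖(fun x => evalT u x)^[m] π‖ ≤ ‖π‖ := by
    intro m
    induction m with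
    | zero => exact ⟨hπE, le_rfl⟩
    | succ m ih =>
      rw [Function.iterate_succ_apply']
      exact hF _ ih.1 ih.2
  have hconst : ∀ m : ℕ, PowerSeries.coeff (R := ℤ_[p]) 0 (iterPS u m) = 0 := by
    intro m
    induction m with
    | zero => simp [iterPS]
    | succ m ih => simp [iterPS, compPS, hu0]
  have hiter_eval : ∀ (m : ℕ) (y : K), y ∈ E → ‖y‖ ≤ ‖π‖ →
      evalT (iterPS u m) y = (fun x => evalT u x)^[m] y := by
    intro m
    induction m with
    | zero =>
      intro y hyE hyr
      exact (hasSum_evalT_X (p := p) y).tsum_eq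
    | succ m ih =>
      intro y hyE hyr
      show evalT (compPS u (iterPS u m)) y = _
      rw [evalT_comp hEc hK hr0 hr1 u (iterPS u m) (hconst m) hyE hyr, ih y hyE hyr,
        Function.iterate_succ_apply']
  -- decomposition g = w + X
  have hgw : iterPS u N = w + PowerSeries.X := by rw [hw]; ring
  have hevalg : ∀ (y : K), y ∈ E → ‖y‖ ≤ ‖π‖ →
      evalT (iterPS u N) y = y + evalT w y := by
    intro y hyE hyr
    have hw1 := (evalT_hasSum hEc hK hr0 hr1 w hyE hyr).1
    have hX := hasSum_evalT_X (p := p) y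
    have hsum := hw1.add hX
    have heq : (fun i : ℕ => algebraMap ℤ_[p] K (PowerSeries.coeff (R := ℤ_[p]) i w) * y ^ i +
        algebraMap ℤ_[p] K (PowerSeries.coeff (R := ℤ_[p]) i PowerSeries.X) * y ^ i) =
        fun i : ℕ => algebraMap ℤ_[p] K (PowerSeries.coeff (R := ℤ_[p]) i (iterPS u N)) * y ^ i := by
      funext i
      rw [hgw, map_add, map_add, add_mul]
    rw [heq] at hsum
    rw [((evalT_hasSum hEc hK hr0 hr1 (iterPS u N) hyE hyr).1).unique hsum, add_comm]
  have hb0 : PowerSeries.coeff (R := ℤ_[p]) 0 w = 0 := by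
    rw [hw, map_sub, hconst]
    simp
  -- claim B : the main estimate at π
  have hBmain : ‖evalT w π - algebraMap ℤ_[p] K b * π ^ (p ^ n)‖ ≤ C := by
    have hw1 := (evalT_hasSum hEc hK hr0 hr1 w hπE le_rfl).1
    have hsingle : HasSum (fun i : ℕ => if i = p ^ n then
        algebraMap ℤ_[p] K b * π ^ (p ^ n) else 0) (algebraMap ℤ_[p] K b * π ^ (p ^ n)) :=
      hasSum_ite_eq (p ^ n) _
    have hd := hw1.sub hsingle
    rw [← hd.tsum_eq]
    apply IsUltrametricDist.norm_tsum_le_of_forall_le_of_nonneg hC0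
    intro i
    rcases eq_or_ne i (p ^ n) with rfl | hi
    · simp [hb, hC0]
    · rw [if_neg hi, sub_zero]
      rcases Nat.eq_zero_or_pos i with rfl | hipos
    
      · simp [hb0, hC0]
      · rcases lt_or_ge i (p ^ n) with hilt | hige
        · rw [norm_mul, norm_pow]
          calc ‖algebraMap ℤ_[p] K (PowerSeries.coeff (R := ℤ_[p]) i w)‖ * ‖π‖ ^ i
              ≤ ‖π‖ ^ ((p - 1) * p ^ n) * ‖π‖ ^ i :=
                mul_le_mul_of_nonneg_right (hsmall i hilt) (pow_nonneg hr0 _)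
            _ = ‖π‖ ^ ((p - 1) * p ^ n + i) := (pow_add _ _ _).symm
            _ ≤ C := hpowmono (by
                have h1 : 1 ≤ p - 1 := by omega
                have : p ^ n ≤ (p - 1) * p ^ n := Nat.le_mul_of_pos_left _ (by omega)
                omega)
        · have := term_norm_le hK w (le_refl ‖π‖) i
          refine this.trans (hpowmono ?_)
          omega
  refine ⟨?_, ?_⟩
  · have e1 : (fun x => evalT u x)^[N] π = π + evalT w π := by
      rw [← hiter_eval N π hπE le_rfl, hevalg π hπE le_rfl]
    rw [e1]
    have e2 : π + evalT w π - (π + algebraMap ℤ_[p] K b * π ^ (p ^ n)) =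
        evalT w π - algebraMap ℤ_[p] K b * π ^ (p ^ n) := by ring
    rw [e2]
    exact hBmain
  · intro j
    induction j with
    | zero => simpa using hC0
    | succ j ih =>
      set F : K → K := fun x => evalT u x with hFdef
      set z := F^[j * N] π with hz
      obtain ⟨hzE, hzr⟩ := hiter_mem (j * N)
      have hjle : ‖(j : K)‖ ≤ 1 := by
        have e : ((j : ℕ) : K) = algebraMap ℚ_[p] K ((j : ℕ) : ℚ_[p]) := (map_natCast _ j).symm
        rw [e, hK]
        have e2 : ((j : ℕ) : ℚ_[p]) = ((j : ℤ) : ℚ_[p]) := by push_cast; ring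
        rw [e2]
        exact Padic.norm_int_le_one _
      have hsnd : ‖(j : K) * algebraMap ℤ_[p] K b * π ^ (p ^ n)‖ ≤ ‖π‖ ^ (p ^ n) := by
        rw [norm_mul, norm_mul, norm_pow]
        calc ‖(j : K)‖ * ‖algebraMap ℤ_[p] K b‖ * ‖π‖ ^ (p ^ n)
            ≤ 1 * ‖π‖ ^ (p ^ n) := by
              apply mul_le_mul_of_nonneg_right _ (pow_nonneg hr0 _)
              exact mul_le_one₀ hjle (norm_nonneg _) (hA_norm_le hK b)
          _ = ‖π‖ ^ (p ^ n) := one_mul _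
      have hzπ : ‖z - π‖ ≤ ‖π‖ ^ (p ^ n) := by
        have e : z - π = (z - (π + (j : K) * algebraMap ℤ_[p] K b * π ^ (p ^ n)))
            + (j : K) * algebraMap ℤ_[p] K b * π ^ (p ^ n) := by ring
        rw [e]
        exact (IsUltrametricDist.norm_add_le_max _ _).trans
          (max_le (ih.trans (hpowmono (by omega))) hsnd)
      have hpowdiff : ∀ i : ℕ, ‖z ^ (i + 1) - π ^ (i + 1)‖ ≤ ‖π‖ ^ (p ^ n) * ‖π‖ ^ i := by
        intro i
        induction i with
        | zero => simpa using hzπ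
        | succ i ihp =>
          have e : z ^ (i + 2) - π ^ (i + 2)
              = z * (z ^ (i + 1) - π ^ (i + 1)) + (z - π) * π ^ (i + 1) := by ring
          rw [e]
          refine (IsUltrametricDist.norm_add_le_max _ _).trans (max_le ?_ ?_)
          · rw [norm_mul]
            calc ‖z‖ * ‖z ^ (i + 1) - π ^ (i + 1)‖
                ≤ ‖π‖ * (‖π‖ ^ (p ^ n) * ‖π‖ ^ i) :=
                  mul_le_mul hzr ihp (norm_nonneg _) hr0
              _ = ‖π‖ ^ (p ^ n) * ‖π‖ ^ (i + 1) := by ring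
          · rw [norm_mul, norm_pow]
            exact mul_le_mul_of_nonneg_right hzπ (pow_nonneg hr0 _) |>.trans
              (le_of_eq (by ring))
      have hW : ‖evalT w z - evalT w π‖ ≤ C := by
        have hd := ((evalT_hasSum hEc hK hr0 hr1 w hzE hzr).1).sub
          ((evalT_hasSum hEc hK hr0 hr1 w hπE le_rfl).1)
        rw [← hd.tsum_eq]
        apply IsUltrametricDist.norm_tsum_le_of_forall_le_of_nonneg hC0
        intro i
        rw [← mul_sub, norm_mul]
        cases i with
        | zero => simpa using hC0
        | succ i =>
          rcases lt_or_ge (i + 1) (p ^ n) with hlt | hge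
          · calc ‖algebraMap ℤ_[p] K (PowerSeries.coeff (R := ℤ_[p]) (i + 1) w)‖ *
                  ‖z ^ (i + 1) - π ^ (i + 1)‖
                ≤ ‖π‖ ^ ((p - 1) * p ^ n) * (‖π‖ ^ (p ^ n) * ‖π‖ ^ i) :=
                  mul_le_mul (hsmall _ hlt) (hpowdiff i) (norm_nonneg _) (pow_nonneg hr0 _)
              _ = ‖π‖ ^ ((p - 1) * p ^ n + (p ^ n + i)) := by rw [← pow_add, ← pow_add]
              _ ≤ C := by
                  apply hpowmono
                  have h1 : p ^ n ≤ (p - 1) * p ^ n := Nat.le_mul_of_pos_left _ (by omega)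
                  have h2 : 1 ≤ p ^ n := by omega
                  omega
          · calc ‖algebraMap ℤ_[p] K (PowerSeries.coeff (R := ℤ_[p]) (i + 1) w)‖ *
                  ‖z ^ (i + 1) - π ^ (i + 1)‖
                ≤ 1 * (‖π‖ ^ (p ^ n) * ‖π‖ ^ i) :=
                  mul_le_mul (hA_norm_le hK _) (hpowdiff i) (norm_nonneg _) zero_le_one
              _ = ‖π‖ ^ (p ^ n + i) := by rw [one_mul, ← pow_add]
              _ ≤ C := hpowmono (by omega)
      have e1 : F^[(j + 1) * N] π = F^[N] z := by
        rw [show (j + 1) * N = N + j * N by ring, Function.iterate_add_apply]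
      have e2 : F^[N] z = z + evalT w z := by
        rw [← hiter_eval N z hzE hzr, hevalg z hzE hzr]
      rw [e1, e2]
      have e3 : z + evalT w z - (π + ((j + 1 : ℕ) : K) * algebraMap ℤ_[p] K b * π ^ (p ^ n))
          = (z - (π + (j : K) * algebraMap ℤ_[p] K b * π ^ (p ^ n)))
            + ((evalT w z - evalT w π)
              + (evalT w π - algebraMap ℤ_[p] K b * π ^ (p ^ n))) := by
        push_cast
        ring
      rw [e3]
      exact (IsUltrametricDist.norm_add_le_max _ _).trans (max_le ih
        ((IsUltrametricDist.norm_add_le_max _ _).trans (max_le hW hBmain)))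

end
end

section
/- Let p be a prime, f ∈ Q_p[[x]] with f(0)=0 and 0 < v_p(f'(0)) < ∞. Then there exists a unique power series L ∈ Q_p[[x]] with L(0)=0 and L'(0)=1 such that L∘f = f'(0)·L; moreover for each a ∈ Q_p there exists a unique [a] ∈ Q_p[[x]] with [a](0)=0, [a]'(0)=a, and [a]∘f = f∘[a], given by [a] = L^{∘−1}(a·L(x)). -/
open PowerSeries

noncomputable section

namespace Stmt18Aux

variable {R : Type*} [CommRing R]

theorem coeff_compPS (h g : PowerSeries R) (n : ℕ) :
    coeff (R := R) n (compPS h g) =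
      ∑ k ∈ Finset.range (n + 1), coeff (R := R) k h * coeff (R := R) n (g ^ k) := by
  simp [compPS]

theorem coeff_pow_eq_zero {g : PowerSeries R} (hg : coeff (R := R) 0 g = 0) {n k : ℕ} (h : n < k) :
    coeff (R := R) n (g ^ k) = 0 := by
  have hX : (X : PowerSeries R) ∣ g := X_dvd_iff.mpr (by simpa using hg)
  obtain ⟨t, ht⟩ : (X : PowerSeries R) ^ k ∣ g ^ k := pow_dvd_pow_of_dvd hX k
  rw [ht, coeff_mul]
  apply Finset.sum_eq_zero
  intro x hx
  have hx1 : x.1 + x.2 = n := Finset.HasAntidiagonal.mem_antidiagonal.mp hx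
  have hne : x.1 ≠ k := by omega
  simp [coeff_X_pow, hne]

theorem coeff_mul_congr {A A' B B' : PowerSeries R} {n : ℕ}
    (hA : ∀ i ≤ n, coeff (R := R) i A = coeff (R := R) i A') (hB : ∀ i ≤ n, coeff (R := R) i B = coeff (R := R) i B') :
    coeff (R := R) n (A * B) = coeff (R := R) n (A' * B') := by
  rw [coeff_mul, coeff_mul]
  apply Finset.sum_congr rfl
  intro x hx
  have hx1 : x.1 + x.2 = n := Finset.HasAntidiagonal.mem_antidiagonal.mp hx
  rw [hA x.1 (by omega), hB x.2 (by omega)]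

theorem coeff_pow_congr {A B : PowerSeries R} {n : ℕ}
    (h : ∀ i ≤ n, coeff (R := R) i A = coeff (R := R) i B) (k : ℕ) :
    ∀ m ≤ n, coeff (R := R) m (A ^ k) = coeff (R := R) m (B ^ k) := by
  induction k with
  | zero => intro m _; simp
  | succ k ih =>
    intro m hm
    rw [pow_succ, pow_succ]
    exact coeff_mul_congr (fun i hi => ih i (le_trans hi hm)) (fun i hi => h i (le_trans hi hm))

theorem coeff_aeval {e : PowerSeries R} (he : coeff (R := R) 0 e = 0) (P : Polynomial R) (n : ℕ) :
    coeff (R := R) n (Polynomial.aeval e P) =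
      ∑ i ∈ Finset.range (n + 1), P.coeff i * coeff (R := R) n (e ^ i) := by
  rw [Polynomial.aeval_eq_sum_range'
      (lt_of_lt_of_le (Nat.lt_succ_self _) (le_max_left (P.natDegree + 1) (n + 1))), map_sum]
  have h1 : ∀ i ∈ Finset.range (max (P.natDegree + 1) (n + 1)),
      coeff (R := R) n (P.coeff i • e ^ i) = P.coeff i * coeff (R := R) n (e ^ i) := by
    intro i _; rw [map_smul, smul_eq_mul]
  rw [Finset.sum_congr rfl h1]
  symm
  apply Finset.sum_subset (Finset.range_subset_range.mpr (le_max_right _ _))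
  intro x _ hx
  have hnx : n < x := by have := Finset.mem_range.not.mp hx; omega
  rw [coeff_pow_eq_zero he hnx, mul_zero]

theorem coeff_compPS_eq {h e : PowerSeries R} (he : coeff (R := R) 0 e = 0)
    {n m : ℕ} (hm : m ≤ n) :
    coeff (R := R) m (compPS h e) = coeff (R := R) m (Polynomial.aeval e (trunc (n + 1) h)) := by
  rw [coeff_compPS, coeff_aeval he]
  apply Finset.sum_congr rfl
  intro k hk
  have hk' : k < n + 1 := by have := Finset.mem_range.mp hk; omega
  rw [coeff_trunc, if_pos hk']

theorem compPS_mul {e : PowerSeries R} (he : coeff (R := R) 0 e = 0) (g₁ g₂ : PowerSeries R) :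
    compPS (g₁ * g₂) e = compPS g₁ e * compPS g₂ e := by
  ext n
  rw [coeff_compPS_eq he (le_refl n)]
  have h1 : coeff (R := R) n (compPS g₁ e * compPS g₂ e) =
      coeff (R := R) n ((Polynomial.aeval e (trunc (n + 1) g₁) : PowerSeries R) *
        Polynomial.aeval e (trunc (n + 1) g₂)) :=
    coeff_mul_congr (fun i hi => coeff_compPS_eq he hi) (fun i hi => coeff_compPS_eq he hi)
  rw [h1, ← map_mul, coeff_aeval he, coeff_aeval he]
  apply Finset.sum_congr rfl
  intro i hi
  have hi' : i < n + 1 := Finset.mem_range.mp hi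
  congr 1
  rw [Polynomial.coeff_mul, coeff_trunc, if_pos hi', coeff_mul]
  apply Finset.sum_congr rfl
  intro x hx
  have hx1 : x.1 + x.2 = i := Finset.HasAntidiagonal.mem_antidiagonal.mp hx
  rw [coeff_trunc, coeff_trunc, if_pos (by omega), if_pos (by omega)]

theorem compPS_one (e : PowerSeries R) : compPS 1 e = 1 := by
  ext n
  rw [coeff_compPS]
  rw [Finset.sum_eq_single 0]
  · simp
  · intro k hk hk0
    have : coeff (R := R) k (1 : PowerSeries R) = 0 := by
      rw [coeff_one, if_neg hk0]
    rw [this, zero_mul]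
  · intro h; exact absurd (Finset.mem_range.mpr (Nat.succ_pos n)) h

theorem compPS_pow {e : PowerSeries R} (he : coeff (R := R) 0 e = 0) (g : PowerSeries R) (k : ℕ) :
    compPS (g ^ k) e = (compPS g e) ^ k := by
  induction k with
  | zero => simpa using compPS_one e
  | succ k ih => rw [pow_succ, pow_succ, compPS_mul he, ih]

theorem compPS_assoc {g e : PowerSeries R} (hg : coeff (R := R) 0 g = 0) (he : coeff (R := R) 0 e = 0)
    (h : PowerSeries R) :
    compPS (compPS h g) e = compPS h (compPS g e) := by
  ext n
  rw [coeff_compPS, coeff_compPS]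
  have h1 : ∀ k ∈ Finset.range (n + 1),
      coeff (R := R) k (compPS h g) * coeff (R := R) n (e ^ k) =
        ∑ j ∈ Finset.range (n + 1), coeff (R := R) j h * coeff (R := R) k (g ^ j) * coeff (R := R) n (e ^ k) := by
    intro k hk
    have hk' : k < n + 1 := Finset.mem_range.mp hk
    rw [coeff_compPS, Finset.sum_mul]
    apply Finset.sum_subset (Finset.range_subset_range.mpr hk')
    intro j _ hj
    have : k < j := by have := Finset.mem_range.not.mp hj; omega
    rw [coeff_pow_eq_zero hg this, mul_zero, zero_mul]
  rw [Finset.sum_congr rfl h1, Finset.sum_comm]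
  apply Finset.sum_congr rfl
  intro j _
  rw [← compPS_pow he, coeff_compPS, Finset.mul_sum]
  apply Finset.sum_congr rfl
  intro k _
  ring

theorem compPS_smul (a : R) (h g : PowerSeries R) :
    compPS (a • h) g = a • compPS h g := by
  ext n
  simp [compPS, Finset.mul_sum, mul_assoc]

theorem compPS_X_left {g : PowerSeries R} (hg : coeff (R := R) 0 g = 0) : compPS X g = g := by
  ext n
  rw [coeff_compPS]
  match n with
  | 0 => simpa [coeff_X] using hg.symm
  | Nat.succ m =>
    rw [Finset.sum_eq_single 1]
    · simp
    · intro k _ hk1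
      rw [coeff_X, if_neg hk1, zero_mul]
    · intro h; exact absurd (Finset.mem_range.mpr (by omega)) h

theorem compPS_X_right (h : PowerSeries R) : compPS h X = h := by
  ext n
  rw [coeff_compPS, Finset.sum_eq_single n]
  · simp [coeff_X_pow]
  · intro k _ hk
    rw [coeff_X_pow, if_neg (fun hh => hk hh.symm), mul_zero]
  · intro hn; exact absurd (Finset.mem_range.mpr (Nat.lt_succ_self n)) hn

theorem coeff_zero_compPS {g : PowerSeries R} (h : PowerSeries R) :
    coeff (R := R) 0 (compPS h g) = coeff (R := R) 0 h := by
  rw [coeff_compPS]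
  simp

theorem coeff_one_compPS {g : PowerSeries R} (hg : coeff (R := R) 0 g = 0) (h : PowerSeries R) :
    coeff (R := R) 1 (compPS h g) = coeff (R := R) 1 h * coeff (R := R) 1 g := by
  rw [coeff_compPS]
  rw [Finset.sum_range_succ, Finset.sum_range_one]
  simp [coeff_one]

theorem coeff_pow_self {g : PowerSeries R} (hg : coeff (R := R) 0 g = 0) (n : ℕ) :
    coeff (R := R) n (g ^ n) = (coeff (R := R) 1 g) ^ n := by
  induction n with
  | zero => simp
  | succ n ih =>
    rw [pow_succ, mul_comm, coeff_mul, Finset.sum_eq_single (1, n)]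
    · rw [ih, pow_succ, mul_comm]
    · intro x hx hxne
      have hx1 : x.1 + x.2 = n + 1 := Finset.HasAntidiagonal.mem_antidiagonal.mp hx
      rcases lt_trichotomy x.2 n with h | h | h
      · rw [coeff_pow_eq_zero hg h, mul_zero]
      · exfalso; apply hxne; have : x.1 = 1 := by omega
        exact Prod.ext this h
      · have hx2 : x.2 = n + 1 := by omega
        have hx0 : x.1 = 0 := by omega
        rw [hx0, hg, zero_mul]
    · intro hmem
      exact absurd (Finset.HasAntidiagonal.mem_antidiagonal.mpr (by omega)) hmem

/-- For `k ≥ 2` and series with zero constant term agreeing below `n`,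
the `n`-th coefficients of `k`-th powers agree. -/
theorem coeff_pow_congr' {A B : PowerSeries R} (hA0 : coeff (R := R) 0 A = 0) (hB0 : coeff (R := R) 0 B = 0)
    {n : ℕ} (h : ∀ i < n, coeff (R := R) i A = coeff (R := R) i B) {k : ℕ} (hk : 2 ≤ k) :
    coeff (R := R) n (A ^ k) = coeff (R := R) n (B ^ k) := by
  obtain ⟨j, rfl⟩ : ∃ j, k = j + 1 := ⟨k - 1, by omega⟩
  have hj : 1 ≤ j := by omega
  rw [pow_succ', pow_succ', coeff_mul, coeff_mul]
  apply Finset.sum_congr rfl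
  intro x hx
  have hx1 : x.1 + x.2 = n := Finset.HasAntidiagonal.mem_antidiagonal.mp hx
  rcases Nat.eq_zero_or_pos x.1 with h1 | h1
  · rw [h1, hA0, hB0, zero_mul, zero_mul]
  rcases Nat.eq_zero_or_pos x.2 with h2 | h2
  · have cA : coeff (R := R) x.2 (A ^ j) = 0 := by
      rw [h2, coeff_zero_eq_constantCoeff, map_pow,
        ← coeff_zero_eq_constantCoeff, hA0, zero_pow (by omega)]
    have cB : coeff (R := R) x.2 (B ^ j) = 0 := by
      rw [h2, coeff_zero_eq_constantCoeff, map_pow,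
        ← coeff_zero_eq_constantCoeff, hB0, zero_pow (by omega)]
    rw [cA, cB, mul_zero, mul_zero]
  · have hx1lt : x.1 < n := by omega
    have hx2le : x.2 ≤ n - 1 := by omega
    rw [h x.1 hx1lt,
      coeff_pow_congr (fun i hi => h i (by omega)) j x.2 hx2le]

section Main

noncomputable def Lc (p : ℕ) [Fact p.Prime] (f : PowerSeries ℚ_[p]) : ℕ → ℚ_[p]
  | 0 => 0
  | 1 => 1
  | (n+2) =>
      -(∑ k ∈ (Finset.range (n+2)).attach,
          Lc p f k.1 * PowerSeries.coeff (R := ℚ_[p]) (n+2) (f ^ k.1))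
        / ((PowerSeries.coeff (R := ℚ_[p]) 1 f) ^ (n+2) - PowerSeries.coeff (R := ℚ_[p]) 1 f)
  decreasing_by exact Finset.mem_range.mp k.2

noncomputable def Ic (p : ℕ) [Fact p.Prime] (g : PowerSeries ℚ_[p]) : ℕ → ℚ_[p]
  | 0 => 0
  | 1 => 1
  | (n+2) =>
      -(∑ k ∈ (Finset.range (n+2)).attach,
          Ic p g k.1 * PowerSeries.coeff (R := ℚ_[p]) (n+2) (g ^ k.1))
  decreasing_by exact Finset.mem_range.mp k.2

variable {p : ℕ} [Fact p.Prime]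

theorem Lc_rec (f : PowerSeries ℚ_[p]) (n : ℕ) :
    Lc p f (n+2) = -(∑ k ∈ Finset.range (n+2), Lc p f k * coeff (R := ℚ_[p]) (n+2) (f ^ k))
      / ((coeff (R := ℚ_[p]) 1 f) ^ (n+2) - coeff (R := ℚ_[p]) 1 f) := by
  rw [Lc, Finset.sum_attach (Finset.range (n+2))
    (fun k => Lc p f k * coeff (R := ℚ_[p]) (n+2) (f ^ k))]

theorem Ic_rec (g : PowerSeries ℚ_[p]) (n : ℕ) :
    Ic p g (n+2) = -(∑ k ∈ Finset.range (n+2), Ic p g k * coeff (R := ℚ_[p]) (n+2) (g ^ k)) := by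
  rw [Ic, Finset.sum_attach (Finset.range (n+2))
    (fun k => Ic p g k * coeff (R := ℚ_[p]) (n+2) (g ^ k))]

variable {f : PowerSeries ℚ_[p]}

theorem cpow_sub_ne (hne : coeff (R := ℚ_[p]) 1 f ≠ 0) (hv : ‖coeff (R := ℚ_[p]) 1 f‖ < 1)
    {n : ℕ} (hn : 2 ≤ n) : (coeff (R := ℚ_[p]) 1 f) ^ n - coeff (R := ℚ_[p]) 1 f ≠ 0 := by
  intro h
  have h1 : (coeff (R := ℚ_[p]) 1 f) ^ n = coeff (R := ℚ_[p]) 1 f := sub_eq_zero.mp h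
  have h2 : ‖coeff (R := ℚ_[p]) 1 f‖ ^ n = ‖coeff (R := ℚ_[p]) 1 f‖ := by rw [← norm_pow, h1]
  have h0 : 0 < ‖coeff (R := ℚ_[p]) 1 f‖ := norm_pos_iff.mpr hne
  have h3 : ‖coeff (R := ℚ_[p]) 1 f‖ ^ n < ‖coeff (R := ℚ_[p]) 1 f‖ ^ 1 :=
    pow_lt_pow_right_of_lt_one₀ h0 hv (by omega)
  rw [pow_one, h2] at h3
  exact lt_irrefl _ h3

theorem L_comp (hf0 : coeff (R := ℚ_[p]) 0 f = 0) (hne : coeff (R := ℚ_[p]) 1 f ≠ 0)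
    (hv : ‖coeff (R := ℚ_[p]) 1 f‖ < 1) :
    compPS (mk (Lc p f)) f = (coeff (R := ℚ_[p]) 1 f) • mk (Lc p f) := by
  ext n
  rw [coeff_compPS, map_smul, smul_eq_mul]
  simp only [coeff_mk]
  match n with
  | 0 => simp [Lc]
  | 1 =>
    rw [Finset.sum_range_succ, Finset.sum_range_one]
    simp [Lc, coeff_one]
  | (m+2) =>
    rw [Finset.sum_range_succ, coeff_pow_self hf0]
    have hd := cpow_sub_ne hne hv (n := m+2) (by omega)
    have hrec' : Lc p f (m+2) * ((coeff (R := ℚ_[p]) 1 f) ^ (m+2) - coeff (R := ℚ_[p]) 1 f)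
        = -(∑ k ∈ Finset.range (m+2), Lc p f k * coeff (R := ℚ_[p]) (m+2) (f ^ k)) := by
      rw [Lc_rec, div_mul_cancel₀ _ hd]
    linear_combination hrec'

theorem L_unique_coeff (hf0 : coeff (R := ℚ_[p]) 0 f = 0) (hne : coeff (R := ℚ_[p]) 1 f ≠ 0)
    (hv : ‖coeff (R := ℚ_[p]) 1 f‖ < 1) {M : PowerSeries ℚ_[p]}
    (hM0 : coeff (R := ℚ_[p]) 0 M = 0) (hM1 : coeff (R := ℚ_[p]) 1 M = 1)
    (hMf : compPS M f = (coeff (R := ℚ_[p]) 1 f) • M) :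
    ∀ n, coeff (R := ℚ_[p]) n M = Lc p f n := by
  intro n
  induction n using Nat.strong_induction_on with
  | _ n ih =>
    match n with
    | 0 => rw [hM0]; simp [Lc]
    | 1 => rw [hM1]; simp [Lc]
    | (m+2) =>
      have hc := congrArg (coeff (R := ℚ_[p]) (m+2)) hMf
      rw [coeff_compPS, map_smul, smul_eq_mul, Finset.sum_range_succ,
        coeff_pow_self hf0] at hc
      have hS : ∑ k ∈ Finset.range (m+2), coeff (R := ℚ_[p]) k M * coeff (R := ℚ_[p]) (m+2) (f ^ k)
          = ∑ k ∈ Finset.range (m+2), Lc p f k * coeff (R := ℚ_[p]) (m+2) (f ^ k) :=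
        Finset.sum_congr rfl (fun k hk => by rw [ih k (Finset.mem_range.mp hk)])
      have hd := cpow_sub_ne hne hv (n := m+2) (by omega)
      have hrec' : Lc p f (m+2) * ((coeff (R := ℚ_[p]) 1 f) ^ (m+2) - coeff (R := ℚ_[p]) 1 f)
          = -(∑ k ∈ Finset.range (m+2), Lc p f k * coeff (R := ℚ_[p]) (m+2) (f ^ k)) := by
        rw [Lc_rec, div_mul_cancel₀ _ hd]
      apply mul_right_cancel₀ hd
      linear_combination hc - hS - hrec'

theorem I_comp {g : PowerSeries ℚ_[p]} (hg0 : coeff (R := ℚ_[p]) 0 g = 0)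
    (hg1 : coeff (R := ℚ_[p]) 1 g = 1) :
    compPS (mk (Ic p g)) g = X := by
  ext n
  rw [coeff_compPS]
  simp only [coeff_mk]
  match n with
  | 0 => simp [Ic, coeff_X]
  | 1 =>
    rw [Finset.sum_range_succ, Finset.sum_range_one]
    simp [Ic, hg1, coeff_one, coeff_X]
  | (m+2) =>
    rw [Finset.sum_range_succ, coeff_pow_self hg0, hg1, one_pow, mul_one, Ic_rec,
      PowerSeries.coeff_X, if_neg (by omega)]
    ring

theorem I_zero (g : PowerSeries ℚ_[p]) : coeff (R := ℚ_[p]) 0 (mk (Ic p g)) = 0 := by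
  simp [Ic]

theorem I_one (g : PowerSeries ℚ_[p]) : coeff (R := ℚ_[p]) 1 (mk (Ic p g)) = 1 := by
  simp [Ic]

theorem I_right {g : PowerSeries ℚ_[p]} (hg0 : coeff (R := ℚ_[p]) 0 g = 0)
    (hg1 : coeff (R := ℚ_[p]) 1 g = 1) :
    compPS g (mk (Ic p g)) = X := by
  have hJ0 : coeff (R := ℚ_[p]) 0 (mk (Ic p g)) = 0 := I_zero g
  have hJ1 : coeff (R := ℚ_[p]) 1 (mk (Ic p g)) = 1 := I_one g
  have hJL : compPS (mk (Ic p g)) g = X := I_comp hg0 hg1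
  have hKJ : compPS (mk (Ic p (mk (Ic p g)))) (mk (Ic p g)) = X := I_comp hJ0 hJ1
  have hKg : mk (Ic p (mk (Ic p g))) = g := by
    calc mk (Ic p (mk (Ic p g)))
        = compPS (mk (Ic p (mk (Ic p g)))) X := (compPS_X_right _).symm
      _ = compPS (mk (Ic p (mk (Ic p g)))) (compPS (mk (Ic p g)) g) := by rw [hJL]
      _ = compPS (compPS (mk (Ic p (mk (Ic p g)))) (mk (Ic p g))) g :=
          (compPS_assoc hJ0 hg0 _).symm
      _ = compPS X g := by rw [hKJ]
      _ = g := compPS_X_left hg0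
  nth_rewrite 1 [← hKg]
  exact hKJ

theorem A_unique (hf0 : coeff (R := ℚ_[p]) 0 f = 0) (hne : coeff (R := ℚ_[p]) 1 f ≠ 0)
    (hv : ‖coeff (R := ℚ_[p]) 1 f‖ < 1) {a : ℚ_[p]} {A B : PowerSeries ℚ_[p]}
    (hA0 : coeff (R := ℚ_[p]) 0 A = 0) (hA1 : coeff (R := ℚ_[p]) 1 A = a)
    (hAf : compPS A f = compPS f A)
    (hB0 : coeff (R := ℚ_[p]) 0 B = 0) (hB1 : coeff (R := ℚ_[p]) 1 B = a)
    (hBf : compPS B f = compPS f B) : A = B := by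
  ext n
  induction n using Nat.strong_induction_on with
  | _ n ih =>
    match n with
    | 0 => rw [hA0, hB0]
    | 1 => rw [hA1, hB1]
    | (m+2) =>
      have hAc := congrArg (coeff (R := ℚ_[p]) (m+2)) hAf
      rw [coeff_compPS, coeff_compPS, Finset.sum_range_succ, coeff_pow_self hf0] at hAc
      have hBc := congrArg (coeff (R := ℚ_[p]) (m+2)) hBf
      rw [coeff_compPS, coeff_compPS, Finset.sum_range_succ, coeff_pow_self hf0] at hBc
      have hS : ∑ k ∈ Finset.range (m+2), coeff (R := ℚ_[p]) k A * coeff (R := ℚ_[p]) (m+2) (f ^ k)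
          = ∑ k ∈ Finset.range (m+2), coeff (R := ℚ_[p]) k B * coeff (R := ℚ_[p]) (m+2) (f ^ k) :=
        Finset.sum_congr rfl (fun k hk => by rw [ih k (Finset.mem_range.mp hk)])
      have hT : (∑ k ∈ Finset.range (m+2+1), coeff (R := ℚ_[p]) k f * coeff (R := ℚ_[p]) (m+2) (A ^ k))
            - (∑ k ∈ Finset.range (m+2+1), coeff (R := ℚ_[p]) k f * coeff (R := ℚ_[p]) (m+2) (B ^ k))
          = coeff (R := ℚ_[p]) 1 f * (coeff (R := ℚ_[p]) (m+2) A - coeff (R := ℚ_[p]) (m+2) B) := by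
        rw [← Finset.sum_sub_distrib, Finset.sum_eq_single 1]
        · rw [pow_one, pow_one]; ring
        · intro k hk hk1
          rcases Nat.lt_or_ge k 2 with h2 | h2
          · have hk0 : k = 0 := by omega
            subst hk0
            simp [hf0]
          · rw [coeff_pow_congr' hA0 hB0 (fun i hi => ih i hi) h2]
            exact sub_self _
        · intro hmem
          exact absurd (Finset.mem_range.mpr (by omega)) hmem
      have key : (coeff (R := ℚ_[p]) (m+2) A - coeff (R := ℚ_[p]) (m+2) B)
          * ((coeff (R := ℚ_[p]) 1 f) ^ (m+2) - coeff (R := ℚ_[p]) 1 f) = 0 := by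
        linear_combination hAc - hBc + hT - hS
      rcases mul_eq_zero.mp key with h | h
      · exact sub_eq_zero.mp h
      · exact absurd h (cpow_sub_ne hne hv (by omega))

theorem M_spec (hf0 : coeff (R := ℚ_[p]) 0 f = 0) {L : PowerSeries ℚ_[p]}
    (hL0 : coeff (R := ℚ_[p]) 0 L = 0) (hL1 : coeff (R := ℚ_[p]) 1 L = 1)
    (hLf : compPS L f = (coeff (R := ℚ_[p]) 1 f) • L)
    {Linv : PowerSeries ℚ_[p]} (h1 : compPS Linv L = X) (h2 : compPS L Linv = X)
    (a : ℚ_[p]) :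
    coeff (R := ℚ_[p]) 0 (compPS Linv (a • L)) = 0 ∧
    coeff (R := ℚ_[p]) 1 (compPS Linv (a • L)) = a ∧
    compPS (compPS Linv (a • L)) f = compPS f (compPS Linv (a • L)) := by
  have haL0 : coeff (R := ℚ_[p]) 0 (a • L) = 0 := by
    rw [map_smul, smul_eq_mul, hL0, mul_zero]
  have hInv0 : coeff (R := ℚ_[p]) 0 Linv = 0 := by
    have h := coeff_zero_compPS (g := L) Linv
    rw [h1] at h
    simpa [coeff_X] using h.symm
  have hInv1 : coeff (R := ℚ_[p]) 1 Linv = 1 := by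
    have h := coeff_one_compPS hL0 Linv
    rw [h1, hL1, mul_one] at h
    simpa [coeff_X] using h.symm
  have hM0 : coeff (R := ℚ_[p]) 0 (compPS Linv (a • L)) = 0 := by
    rw [coeff_zero_compPS, hInv0]
  have hM1 : coeff (R := ℚ_[p]) 1 (compPS Linv (a • L)) = a := by
    rw [coeff_one_compPS haL0, hInv1, one_mul, map_smul, smul_eq_mul, hL1, mul_one]
  have step1 : compPS L (compPS Linv (a • L)) = a • L := by
    rw [← compPS_assoc hInv0 haL0 L, h2, compPS_X_left haL0]
  have hMf0 : coeff (R := ℚ_[p]) 0 (compPS (compPS Linv (a • L)) f) = 0 := by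
    rw [coeff_zero_compPS, hM0]
  have hfM0 : coeff (R := ℚ_[p]) 0 (compPS f (compPS Linv (a • L))) = 0 := by
    rw [coeff_zero_compPS, hf0]
  have step2 : compPS L (compPS (compPS Linv (a • L)) f)
      = compPS L (compPS f (compPS Linv (a • L))) := by
    rw [← compPS_assoc hM0 hf0 L, step1, ← compPS_assoc hf0 hM0 L, hLf]
    rw [compPS_smul, compPS_smul, hLf, step1, smul_smul, smul_smul, mul_comm]
  have step3 : compPS (compPS Linv (a • L)) f = compPS f (compPS Linv (a • L)) := by
    calc compPS (compPS Linv (a • L)) f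
        = compPS X (compPS (compPS Linv (a • L)) f) := (compPS_X_left hMf0).symm
      _ = compPS (compPS Linv L) (compPS (compPS Linv (a • L)) f) := by rw [h1]
      _ = compPS Linv (compPS L (compPS (compPS Linv (a • L)) f)) :=
          compPS_assoc hL0 hMf0 Linv
      _ = compPS Linv (compPS L (compPS f (compPS Linv (a • L)))) := by rw [step2]
      _ = compPS (compPS Linv L) (compPS f (compPS Linv (a • L))) :=
          (compPS_assoc hL0 hfM0 Linv).symm
      _ = compPS X (compPS f (compPS Linv (a • L))) := by rw [h1]
      _ = compPS f (compPS Linv (a • L)) := compPS_X_left hfM0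
  exact ⟨hM0, hM1, step3⟩

end Main
end Stmt18Aux

open Stmt18Aux in
/-- Lubin's logarithm `L_f` and the series `[a]_f = L^{∘-1}(a·L)`. -/
theorem stmt_18 (p : ℕ) [Fact p.Prime]
    (f : PowerSeries ℚ_[p])
    (hf0 : PowerSeries.coeff (R := ℚ_[p]) 0 f = 0)
    -- `0 < v_p(f'(0)) < ∞`
    (hf1ne : PowerSeries.coeff (R := ℚ_[p]) 1 f ≠ 0)
    (hf1v : ‖PowerSeries.coeff (R := ℚ_[p]) 1 f‖ < 1) :
    -- there is a unique `L` with `L(0) = 0`, `L'(0) = 1` and `L ∘ f = f'(0)·L`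
    (∃! L : PowerSeries ℚ_[p],
      PowerSeries.coeff (R := ℚ_[p]) 0 L = 0 ∧ PowerSeries.coeff (R := ℚ_[p]) 1 L = 1 ∧
      compPS L f = (PowerSeries.coeff (R := ℚ_[p]) 1 f) • L) ∧
    -- for each `a` there is a unique `[a]` with `[a](0) = 0`, `[a]'(0) = a`,
    -- `[a] ∘ f = f ∘ [a]`, and it is given by `[a] = L^{∘-1}(a·L(x))`
    (∀ L : PowerSeries ℚ_[p],
      (PowerSeries.coeff (R := ℚ_[p]) 0 L = 0 ∧ PowerSeries.coeff (R := ℚ_[p]) 1 L = 1 ∧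
        compPS L f = (PowerSeries.coeff (R := ℚ_[p]) 1 f) • L) →
      ∀ a : ℚ_[p],
        (∃! A : PowerSeries ℚ_[p],
          PowerSeries.coeff (R := ℚ_[p]) 0 A = 0 ∧ PowerSeries.coeff (R := ℚ_[p]) 1 A = a ∧
          compPS A f = compPS f A) ∧
        (∀ Linv : PowerSeries ℚ_[p],
          compPS Linv L = PowerSeries.X → compPS L Linv = PowerSeries.X →
          (PowerSeries.coeff (R := ℚ_[p]) 0 (compPS Linv (a • L)) = 0 ∧
           PowerSeries.coeff (R := ℚ_[p]) 1 (compPS Linv (a • L)) = a ∧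
           compPS (compPS Linv (a • L)) f = compPS f (compPS Linv (a • L))))) := by
  constructor
  · refine ⟨PowerSeries.mk (Lc p f), ⟨by simp [Lc], by simp [Lc],
      L_comp hf0 hf1ne hf1v⟩, ?_⟩
    rintro M ⟨hM0, hM1, hMf⟩
    ext n
    rw [PowerSeries.coeff_mk]
    exact L_unique_coeff hf0 hf1ne hf1v hM0 hM1 hMf n
  · rintro L ⟨hL0, hL1, hLf⟩ a
    constructor
    · have hI := I_comp hL0 hL1
      have hIr := I_right hL0 hL1
      obtain ⟨hM0, hM1, hMf⟩ := M_spec hf0 hL0 hL1 hLf hI hIr a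
      refine ⟨compPS (PowerSeries.mk (Ic p L)) (a • L), ⟨hM0, hM1, hMf⟩, ?_⟩
      rintro B ⟨hB0, hB1, hBf⟩
      exact A_unique hf0 hf1ne hf1v hB0 hB1 hBf hM0 hM1 hMf
    · intro Linv h1 h2
      exact M_spec hf0 hL0 hL1 hLf h1 h2 a

end
end
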